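/- Disjunction is not strongly definable in atomic System F with primitive disjunction: there is no formula C of the pure second-order language (variables, ⊃, ∀) such that C ⊣⊢ Y∨Z in NI²∨_at, for distinct propositional variables Y, Z. -/

import Mathlib

/-- Formulas of second-order propositional logic with primitive disjunction:
variables, ⊃, ∨, ∀. -/
inductive Fm : Type
  | var : ℕ → Fm
  | imp : Fm → Fm → Fm
  | or  : Fm → Fm → Fm
  | all : ℕ → Fm → Fm
deriving DecidableEq

namespace Fm

/-- `Free X A`: the variable `X` occurs free in `A`. -/
def Free (X : ℕ) : Fm → Prop
  | var Y => X = Y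
  | imp A B => Free X A ∨ Free X B
  | or A B => Free X A ∨ Free X B
  | all Y A => X ≠ Y ∧ Free X A

/-- Substitution of `C` for the free occurrences of `X`. -/
def subst (X : ℕ) (C : Fm) : Fm → Fm
  | var Y => if X = Y then C else var Y
  | imp A B => imp (subst X C A) (subst X C B)
  | or A B => or (subst X C A) (subst X C B)
  | all Y A => if X = Y then all Y A else all Y (subst X C A)

/-- `C` is substitutable (free) for `X` in the given formula (no capture). -/
def FreeFor (C : Fm) (X : ℕ) : Fm → Prop
  | var _ => True
  | imp A B => FreeFor C X A ∧ FreeFor C X B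
  | or A B => FreeFor C X A ∧ FreeFor C X B
  | all Y A => (¬ Free X (all Y A)) ∨ (¬ Free Y C ∧ FreeFor C X A)

end Fm

/-- Natural deduction for second-order propositional logic with primitive
disjunction (the system `NI²∨`).  When `atomic = true` the witness of
∀-elimination must be a variable: this is the system `NI²∨_at`. -/
inductive Deriv (atomic : Bool) : Set Fm → Fm → Prop
  | ax {Γ A} : A ∈ Γ → Deriv atomic Γ A
  | impI {Γ A B} : Deriv atomic (insert A Γ) B → Deriv atomic Γ (.imp A B)
  | impE {Γ A B} : Deriv atomic Γ (.imp A B) → Deriv atomic Γ A → Deriv atomic Γ B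
  | orI1 {Γ A B} : Deriv atomic Γ A → Deriv atomic Γ (.or A B)
  | orI2 {Γ A B} : Deriv atomic Γ B → Deriv atomic Γ (.or A B)
  | orE {Γ A B C} : Deriv atomic Γ (.or A B) →
      Deriv atomic (insert A Γ) C → Deriv atomic (insert B Γ) C →
      Deriv atomic Γ C
  | allI {Γ X A} : Deriv atomic Γ A → (∀ B ∈ Γ, ¬ Fm.Free X B) →
      Deriv atomic Γ (.all X A)
  | allE {Γ X A C} : Deriv atomic Γ (.all X A) → Fm.FreeFor C X A →
      (atomic = true → ∃ Y, C = Fm.var Y) →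
      Deriv atomic Γ (Fm.subst X C A)

/-- Disjunction-free formulas (formulas of the pure second-order language). -/
def OrFree : Fm → Prop
  | .var _ => True
  | .imp A B => OrFree A ∧ OrFree B
  | .or _ _ => False
  | .all _ A => OrFree A

/-! ### A semantic countermodel

We interpret formulas in the 5-element Heyting algebra
`⊥ < a, b < c = a ⊔ b < ⊤`, where the quantifier `∀X` ranges only over the
subset `S = {⊥, a, b}` of values that variables may take.  All rules of the
atomic system `NI²∨_at` are sound for this semantics.  Every ∨-free formula
takes values in `P = {⊥, a, b, ⊤}` (never `c`), while `Y ∨ Z` takes the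
value `c` at the valuation `Y ↦ a`, `Z ↦ b`. -/

inductive D5 : Type
  | bot | aa | bb | cc | top
deriving DecidableEq

instance : Fintype D5 :=
  Fintype.ofList [D5.bot, D5.aa, D5.bb, D5.cc, D5.top] (by intro x; cases x <;> simp)

namespace D5

def leB : D5 → D5 → Bool
  | bot, _ => true
  | _, top => true
  | aa, aa => true
  | aa, cc => true
  | bb, bb => true
  | bb, cc => true
  | cc, cc => true
  | _, _ => false

def le (x y : D5) : Prop := leB x y = true

instance (x y : D5) : Decidable (le x y) := by unfold le; infer_instance

def inf : D5 → D5 → D5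
  | bot, _ => bot
  | _, bot => bot
  | top, y => y
  | x, top => x
  | aa, aa => aa
  | aa, bb => bot
  | aa, cc => aa
  | bb, aa => bot
  | bb, bb => bb
  | bb, cc => bb
  | cc, aa => aa
  | cc, bb => bb
  | cc, cc => cc

def sup : D5 → D5 → D5
  | top, _ => top
  | _, top => top
  | bot, y => y
  | x, bot => x
  | aa, aa => aa
  | aa, bb => cc
  | aa, cc => cc
  | bb, aa => cc
  | bb, bb => bb
  | bb, cc => cc
  | cc, aa => cc
  | cc, bb => cc
  | cc, cc => cc

def himp : D5 → D5 → D5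
  | bot, _ => top
  | _, top => top
  | top, y => y
  | aa, aa => top
  | aa, bb => bb
  | aa, cc => top
  | aa, bot => bb
  | bb, bb => top
  | bb, aa => aa
  | bb, cc => top
  | bb, bot => aa
  | cc, aa => aa
  | cc, bb => bb
  | cc, cc => top
  | cc, bot => bot

lemma le_refl : ∀ x : D5, le x x := by decide
lemma le_antisymm : ∀ x y : D5, le x y → le y x → x = y := by decide
lemma himp_intro : ∀ d x y : D5, le (inf d x) y → le d (himp x y) := by decide
lemma le_sup_left : ∀ d x y : D5, le d x → le d (sup x y) := by decide
lemma le_sup_right : ∀ d x y : D5, le d y → le d (sup x y) := by decide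
lemma sup_case : ∀ d x y c : D5,
    le d (sup x y) → le (inf d x) c → le (inf d y) c → le d c := by decide
lemma himp_mp : ∀ d x y : D5, le d (himp x y) → le d x → le d y := by decide
lemma le_inf3 : ∀ d x y z : D5,
    le d x → le d y → le d z → le d (inf (inf x y) z) := by decide
lemma inf3_le_left : ∀ x y z : D5, le (inf (inf x y) z) x := by decide
lemma inf3_le_mid : ∀ x y z : D5, le (inf (inf x y) z) y := by decide
lemma inf3_le_right : ∀ x y z : D5, le (inf (inf x y) z) z := by decide
lemma inf_le_self : ∀ d x : D5, le (inf d x) d := by decide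
lemma inf_le_arg : ∀ d x : D5, le (inf d x) x := by decide
lemma le_trans : ∀ x y z : D5, le x y → le y z → le x z := by decide
lemma himp_ne : ∀ x y : D5, x ≠ cc → y ≠ cc → himp x y ≠ cc := by decide
lemma inf_ne : ∀ x y : D5, x ≠ cc → y ≠ cc → inf x y ≠ cc := by decide

/-- The set of values that propositional variables may take. -/
def inS (d : D5) : Prop := d = bot ∨ d = aa ∨ d = bb

end D5

open D5 in
/-- Evaluation of formulas; `∀X` is a meet over the three values in `S`. -/
def eval (ρ : ℕ → D5) : Fm → D5
  | .var n => ρ n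
  | .imp A B => himp (eval ρ A) (eval ρ B)
  | .or A B => sup (eval ρ A) (eval ρ B)
  | .all X A => inf (inf (eval (Function.update ρ X bot) A)
      (eval (Function.update ρ X aa) A)) (eval (Function.update ρ X bb) A)

/-- Evaluation only depends on the free variables. -/
lemma eval_coincide : ∀ (A : Fm) (ρ ρ' : ℕ → D5),
    (∀ n, Fm.Free n A → ρ n = ρ' n) → eval ρ A = eval ρ' A := by
  intro A
  induction A with
  | var n => intro ρ ρ' h; exact h n rfl
  | imp A B ihA ihB =>
      intro ρ ρ' h
      simp only [eval]
      rw [ihA ρ ρ' (fun n hn => h n (Or.inl hn)), ihB ρ ρ' (fun n hn => h n (Or.inr hn))]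
  | or A B ihA ihB =>
      intro ρ ρ' h
      simp only [eval]
      rw [ihA ρ ρ' (fun n hn => h n (Or.inl hn)), ihB ρ ρ' (fun n hn => h n (Or.inr hn))]
  | all X A ih =>
      intro ρ ρ' h
      have key : ∀ s : D5,
          eval (Function.update ρ X s) A = eval (Function.update ρ' X s) A := by
        intro s
        apply ih
        intro n hn
        by_cases hnX : n = X
        · subst hnX; simp [Function.update]
        · rw [Function.update_of_ne hnX, Function.update_of_ne hnX]
          exact h n ⟨hnX, hn⟩
      simp only [eval, key]

/-- Substituting for a variable that does not occur free changes nothing. -/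
lemma subst_not_free : ∀ (A : Fm) (X : ℕ) (C : Fm),
    ¬ Fm.Free X A → Fm.subst X C A = A := by
  intro A
  induction A with
  | var n =>
      intro X C h
      simp only [Fm.subst]
      rw [if_neg]
      exact fun hXn => h hXn
  | imp A B ihA ihB =>
      intro X C h
      simp only [Fm.subst, Fm.Free] at *
      push_neg at h
      rw [ihA X C h.1, ihB X C h.2]
  | or A B ihA ihB =>
      intro X C h
      simp only [Fm.subst, Fm.Free] at *
      push_neg at h
      rw [ihA X C h.1, ihB X C h.2]
  | all W A ih =>
      intro X C h
      simp only [Fm.subst, Fm.Free] at *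
      by_cases hXW : X = W
      · rw [if_pos hXW]
      · rw [if_neg hXW]
        have : ¬ Fm.Free X A := fun hf => h ⟨hXW, hf⟩
        rw [ih X C this]

/-- Substitution lemma (for variables). -/
lemma eval_subst_var : ∀ (A : Fm) (X Y : ℕ) (ρ : ℕ → D5),
    Fm.FreeFor (.var Y) X A →
    eval ρ (Fm.subst X (.var Y) A) = eval (Function.update ρ X (ρ Y)) A := by
  intro A
  induction A with
  | var n =>
      intro X Y ρ _
      simp only [Fm.subst]
      by_cases hXn : X = n
      · subst hXn; simp [eval, Function.update]
      · rw [if_neg hXn]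
        simp only [eval]
        rw [Function.update_of_ne (fun h => hXn h.symm)]
  | imp A B ihA ihB =>
      intro X Y ρ hff
      simp only [Fm.subst, eval]
      rw [ihA X Y ρ hff.1, ihB X Y ρ hff.2]
  | or A B ihA ihB =>
      intro X Y ρ hff
      simp only [Fm.subst, eval]
      rw [ihA X Y ρ hff.1, ihB X Y ρ hff.2]
  | all W A ih =>
      intro X Y ρ hff
      by_cases hXW : X = W
      · subst hXW
        simp only [Fm.subst, if_pos rfl, ↓reduceIte]
        have key : ∀ s : D5,
            Function.update (Function.update ρ X (ρ Y)) X s = Function.update ρ X s := by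
          intro s
          funext n
          by_cases hn : n = X
          · subst hn; simp [Function.update]
          · simp [Function.update_of_ne hn]
        simp only [eval, key]
      · simp only [Fm.subst, if_neg hXW]
        rcases hff with hnf | ⟨hYW, hff⟩
        · -- X not free in all W A, hence not free in A
          have hXA : ¬ Fm.Free X A := by
            intro hf; exact hnf ⟨hXW, hf⟩
          rw [subst_not_free A X _ hXA]
          exact eval_coincide _ _ _ (by
            intro n hn
            rcases hn with ⟨hnW, hnA⟩
            have hnX : n ≠ X := fun h => hXA (h ▸ hnA)
            rw [Function.update_of_ne hnX])
        · -- Y ≠ W and FreeFor in A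
          have hYW' : Y ≠ W := fun h => hYW h.symm
          have key : ∀ s : D5,
              eval (Function.update ρ W s) (Fm.subst X (.var Y) A)
                = eval (Function.update (Function.update ρ X (ρ Y)) W s) A := by
            intro s
            rw [ih X Y (Function.update ρ W s) hff]
            have h1 : Function.update ρ W s Y = ρ Y := Function.update_of_ne hYW' _ _
            rw [h1]
            congr 1
            funext n
            by_cases hnX : n = X
            · subst hnX
              rw [Function.update_self, Function.update_of_ne hXW, Function.update_self]
            · rw [Function.update_of_ne hnX]
              by_cases hnW : n = W
              · subst hnW; rw [Function.update_self, Function.update_self]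
              · rw [Function.update_of_ne hnW, Function.update_of_ne hnW,
                  Function.update_of_ne hnX]
          simp only [eval, key]

open D5 in
/-- Fundamental lemma: ∨-free formulas never take the value `c`. -/
lemma orfree_eval_ne : ∀ (A : Fm), OrFree A → ∀ ρ : ℕ → D5,
    (∀ n, inS (ρ n)) → eval ρ A ≠ cc := by
  intro A
  induction A with
  | var n =>
      intro _ ρ hρ
      rcases hρ n with h | h | h <;> simp [eval, h]
  | imp A B ihA ihB =>
      intro hof ρ hρ
      exact himp_ne _ _ (ihA hof.1 ρ hρ) (ihB hof.2 ρ hρ)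
  | or A B _ _ => intro hof; exact absurd hof (by simp [OrFree])
  | all X A ih =>
      intro hof ρ hρ
      have hupd : ∀ s : D5, inS s → ∀ n, inS (Function.update ρ X s n) := by
        intro s hs n
        by_cases hn : n = X
        · subst hn; simp [Function.update, hs]
        · rw [Function.update_of_ne hn]; exact hρ n
      have h1 := ih hof _ (hupd bot (Or.inl rfl))
      have h2 := ih hof _ (hupd aa (Or.inr (Or.inl rfl)))
      have h3 := ih hof _ (hupd bb (Or.inr (Or.inr rfl)))
      exact inf_ne _ _ (inf_ne _ _ h1 h2) h3

open D5 in
/-- Soundness of `NI²∨_at` for the countermodel semantics. -/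
lemma sound {Γ : Set Fm} {A : Fm} (h : Deriv true Γ A) :
    ∀ ρ : ℕ → D5, (∀ n, inS (ρ n)) → ∀ d : D5,
      (∀ G ∈ Γ, le d (eval ρ G)) → le d (eval ρ A) := by
  induction h with
  | ax hmem => intro ρ hρ d hd; exact hd _ hmem
  | impI _ ih =>
      intro ρ hρ d hd
      apply himp_intro
      apply ih ρ hρ
      intro G hG
      rcases hG with hG | hG
      · subst hG; exact inf_le_arg _ _
      · exact le_trans _ _ _ (inf_le_self _ _) (hd G hG)
  | impE _ _ ih1 ih2 =>
      intro ρ hρ d hd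
      exact himp_mp _ _ _ (ih1 ρ hρ d hd) (ih2 ρ hρ d hd)
  | orI1 _ ih => intro ρ hρ d hd; exact le_sup_left _ _ _ (ih ρ hρ d hd)
  | orI2 _ ih => intro ρ hρ d hd; exact le_sup_right _ _ _ (ih ρ hρ d hd)
  | orE _ _ _ ih1 ih2 ih3 =>
      intro ρ hρ d hd
      refine sup_case d _ _ _ (ih1 ρ hρ d hd) ?_ ?_
      · apply ih2 ρ hρ
        intro G hG
        rcases hG with hG | hG
        · subst hG; exact inf_le_arg _ _
        · exact le_trans _ _ _ (inf_le_self _ _) (hd G hG)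
      · apply ih3 ρ hρ
        intro G hG
        rcases hG with hG | hG
        · subst hG; exact inf_le_arg _ _
        · exact le_trans _ _ _ (inf_le_self _ _) (hd G hG)
  | @allI Γ X A _ hside ih =>
      intro ρ hρ d hd
      have hupd : ∀ s : D5, inS s → ∀ n, inS (Function.update ρ X s n) := by
        intro s hs n
        by_cases hn : n = X
        · subst hn; simp [Function.update, hs]
        · rw [Function.update_of_ne hn]; exact hρ n
      have hctx : ∀ s : D5, ∀ G ∈ Γ, le d (eval (Function.update ρ X s) G) := by
        intro s G hG
        have : eval (Function.update ρ X s) G = eval ρ G := by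
          apply eval_coincide
          intro n hn
          have : n ≠ X := fun h => hside G hG (h ▸ hn)
          rw [Function.update_of_ne this]
        rw [this]; exact hd G hG
      exact le_inf3 d _ _ _
        (ih _ (hupd bot (Or.inl rfl)) d (hctx bot))
        (ih _ (hupd aa (Or.inr (Or.inl rfl))) d (hctx aa))
        (ih _ (hupd bb (Or.inr (Or.inr rfl))) d (hctx bb))
  | @allE Γ X A C _ hff hat ih =>
      intro ρ hρ d hd
      obtain ⟨W, rfl⟩ := hat rfl
      rw [eval_subst_var A X W ρ hff]
      have hall := ih ρ hρ d hd
      simp only [eval] at hall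
      rcases hρ W with h | h | h
      · rw [h] at *
        exact le_trans _ _ _ hall (inf3_le_left _ _ _)
      · rw [h] at *
        exact le_trans _ _ _ hall (inf3_le_mid _ _ _)
      · rw [h] at *
        exact le_trans _ _ _ hall (inf3_le_right _ _ _)

/-- Disjunction is not strongly definable in atomic System F: there is no
formula `C` of the pure second-order language (no ∨) with `C ⊣⊢ Y∨Z` in
`NI²∨_at`, for distinct variables `Y`, `Z`. -/

theorem or_not_strongly_definable (Y Z : ℕ) (hYZ : Y ≠ Z) :
    ¬ ∃ C : Fm, OrFree C ∧
        Deriv true {C} (.or (.var Y) (.var Z)) ∧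
        Deriv true {.or (.var Y) (.var Z)} C := by
  rintro ⟨C, hof, h1, h2⟩
  classical
  set ρ0 : ℕ → D5 := fun n => if n = Y then D5.aa else if n = Z then D5.bb else D5.bot
    with hρ0
  have hS : ∀ n, D5.inS (ρ0 n) := by
    intro n
    simp only [hρ0]
    split_ifs <;> simp [D5.inS]
  have hZY : Z ≠ Y := fun h => hYZ h.symm
  have hY : ρ0 Y = D5.aa := by simp [hρ0]
  have hZ : ρ0 Z = D5.bb := by simp [hρ0, hZY]
  have horval : eval ρ0 (.or (.var Y) (.var Z)) = D5.cc := by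
    simp [eval, hY, hZ, D5.sup]
  -- {Y∨Z} ⊢ C gives c ≤ ⟦C⟧
  have hle1 : D5.le D5.cc (eval ρ0 C) := by
    have := sound h2 ρ0 hS D5.cc (by
      intro G hG
      rcases hG with rfl
      rw [horval]
      exact D5.le_refl _)
    exact this
  -- C ⊢ Y∨Z gives ⟦C⟧ ≤ c
  have hle2 : D5.le (eval ρ0 C) D5.cc := by
    have := sound h1 ρ0 hS (eval ρ0 C) (by
      intro G hG
      rcases hG with rfl
      exact D5.le_refl _)
    rwa [horval] at this
  have : eval ρ0 C = D5.cc := D5.le_antisymm _ _ hle2 hle1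
  exact orfree_eval_ne C hof ρ0 hS this
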